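/- Suppose p in R<x,x*> has the form p = (s + q_1) q_2 + c, where q_1 and q_2 are antisymmetric (q_i* = -q_i), q_2 is nonzero, s is a nonzero sum of squares, c is a constant, and deg(s + q_1) > 0. Then the left ideal generated by p is not real; indeed q_2* p + p* q_2 = 2 q_2* s q_2 is a nonzero sum of squares in I + I* and deg(q_2) < deg(p). -/

import Mathlib

open scoped BigOperators

noncomputable section

/-- The free real *-algebra on `g` variables `x₁,…,x_g` and their formal adjoints
`x₁*,…,x_g*`, modeled as the monoid algebra of the free monoid on `2g` letters,
where `Sum.inl i` is `xᵢ` and `Sum.inr i` is `xᵢ*`. -/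
abbrev FreeStarAlg (g : ℕ) := MonoidAlgebra ℝ (FreeMonoid (Fin g ⊕ Fin g))

namespace FreeStarAlg

variable {g : ℕ}

/-- The involution on words: reverse the word and star each letter. -/
def starWord (w : FreeMonoid (Fin g ⊕ Fin g)) : FreeMonoid (Fin g ⊕ Fin g) :=
  FreeMonoid.ofList (((FreeMonoid.toList w).map Sum.swap).reverse)

/-- The involution `p ↦ p*` on the free *-algebra. -/
def starP (p : FreeStarAlg g) : FreeStarAlg g :=
  MonoidAlgebra.ofCoeff (Finsupp.mapDomain starWord p.coeff)

/-- The monomial corresponding to a word. -/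
def mono (w : FreeMonoid (Fin g ⊕ Fin g)) : FreeStarAlg g :=
  MonoidAlgebra.single w 1

/-- Degree of a noncommutative polynomial. -/
def deg (p : FreeStarAlg g) : ℕ :=
  p.coeff.support.sup fun w => (FreeMonoid.toList w).length

/-- `p` is homogeneous of degree `d`: every word appearing in `p` has length `d`. -/
def IsHom (d : ℕ) (p : FreeStarAlg g) : Prop :=
  ∀ w ∈ p.coeff.support, (FreeMonoid.toList w).length = d

/-- `p` is a (finite) sum of hermitian squares `qᵢ* qᵢ`. -/
def IsSOS (p : FreeStarAlg g) : Prop :=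
  ∃ (k : ℕ) (q : Fin k → FreeStarAlg g), p = ∑ i, starP (q i) * q i

/-- Membership in `I + I*`. -/
def MemIplusIstar (I : Submodule (FreeStarAlg g) (FreeStarAlg g)) (p : FreeStarAlg g) : Prop :=
  ∃ u ∈ I, ∃ v ∈ I, p = u + starP v

/-- A left ideal `I` is real if `∑ aᵢ* aᵢ ∈ I + I*` forces every `aᵢ ∈ I`. -/
def IsRealIdeal (I : Submodule (FreeStarAlg g) (FreeStarAlg g)) : Prop :=
  ∀ (r : ℕ) (a : Fin r → FreeStarAlg g),
    MemIplusIstar I (∑ i, starP (a i) * a i) → ∀ i, a i ∈ I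

/-- The left ideal generated by a set `S`. -/
def leftIdealGen (S : Set (FreeStarAlg g)) : Submodule (FreeStarAlg g) (FreeStarAlg g) :=
  Submodule.span (FreeStarAlg g) S

/-- `p` is irreducible: it cannot be written as a product of two polynomials of
strictly smaller degree. -/
def Irred (p : FreeStarAlg g) : Prop :=
  ¬ ∃ q r : FreeStarAlg g, p = q * r ∧ deg q < deg p ∧ deg r < deg p

/-- `p` is analytic: it contains no starred variables. -/
def IsAnalytic (p : FreeStarAlg g) : Prop :=
  ∀ w ∈ p.coeff.support, ∀ l ∈ FreeMonoid.toList w, l.isLeft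

end FreeStarAlg

namespace FreeStarAlg
variable {g : ℕ}

-- basic starWord lemmas
lemma starWord_mul (u v : FreeMonoid (Fin g ⊕ Fin g)) :
    starWord (u * v) = starWord v * starWord u := by
  simp [starWord, FreeMonoid.toList_mul]

lemma starWord_starWord (w : FreeMonoid (Fin g ⊕ Fin g)) : starWord (starWord w) = w := by
  simp [starWord, List.map_reverse, List.map_map]

lemma length_starWord (w : FreeMonoid (Fin g ⊕ Fin g)) :
    (FreeMonoid.toList (starWord w)).length = (FreeMonoid.toList w).length := by
  simp [starWord]

lemma starWord_injective : Function.Injective (starWord (g := g)) :=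
  Function.LeftInverse.injective starWord_starWord

lemma starWord_one : starWord (1 : FreeMonoid (Fin g ⊕ Fin g)) = 1 := rfl

end FreeStarAlg
namespace FreeStarAlg
variable {g : ℕ}

lemma starP_zero : starP (0 : FreeStarAlg g) = 0 := by
  rw [starP, MonoidAlgebra.coeff_zero, Finsupp.mapDomain_zero, MonoidAlgebra.ofCoeff_zero]

lemma starP_add (a b : FreeStarAlg g) : starP (a + b) = starP a + starP b := by
  rw [starP, starP, starP, MonoidAlgebra.coeff_add, Finsupp.mapDomain_add, MonoidAlgebra.ofCoeff_add]

lemma starP_smul (r : ℝ) (a : FreeStarAlg g) : starP (r • a) = r • starP a := by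
  rw [starP, starP, MonoidAlgebra.coeff_smul, Finsupp.mapDomain_smul, MonoidAlgebra.ofCoeff_smul]

lemma starP_neg (a : FreeStarAlg g) : starP (-a) = -starP a := by
  have := starP_smul (-1) a; simpa using this

lemma starP_sub (a b : FreeStarAlg g) : starP (a - b) = starP a - starP b := by
  rw [sub_eq_add_neg, starP_add, starP_neg, sub_eq_add_neg]

lemma starP_sum {ι : Type*} (s : Finset ι) (f : ι → FreeStarAlg g) :
    starP (∑ i ∈ s, f i) = ∑ i ∈ s, starP (f i) := by
  classical
  induction s using Finset.induction with
  | empty => simp [starP_zero]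
  | insert _ _ h ih => simp [Finset.sum_insert h, starP_add, ih]

lemma starP_single (w : FreeMonoid (Fin g ⊕ Fin g)) (r : ℝ) :
    starP (MonoidAlgebra.single w r) = MonoidAlgebra.single (starWord w) r := by
  rw [starP, MonoidAlgebra.coeff_single, Finsupp.mapDomain_single, MonoidAlgebra.ofCoeff_single]

lemma starP_mul (a b : FreeStarAlg g) : starP (a * b) = starP b * starP a := by
  induction a using MonoidAlgebra.induction_linear with
  | zero => simp [starP_zero]
  | add f h hf hh => rw [add_mul, starP_add, hf, hh, starP_add, mul_add]
  | single u r =>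
    induction b using MonoidAlgebra.induction_linear with
    | zero => simp [starP_zero]
    | add f h hf hh => rw [mul_add, starP_add, hf, hh, starP_add, add_mul]
    | single v t =>
      show starP (MonoidAlgebra.single u r * MonoidAlgebra.single v t) = _
      rw [MonoidAlgebra.single_mul_single, starP_single, starP_single, starP_single,
        MonoidAlgebra.single_mul_single, starWord_mul, mul_comm]

lemma starP_starP (a : FreeStarAlg g) : starP (starP a) = a := by
  rw [starP, starP, MonoidAlgebra.coeff_ofCoeff, ← Finsupp.mapDomain_comp]
  have : (starWord (g := g)) ∘ starWord = id := funext starWord_starWord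
  rw [this, Finsupp.mapDomain_id, MonoidAlgebra.ofCoeff_coeff]

lemma starP_eq_zero_iff {a : FreeStarAlg g} : starP a = 0 ↔ a = 0 := by
  constructor
  · intro h; have := congrArg starP h; rwa [starP_starP, starP_zero] at this
  · rintro rfl; exact starP_zero

lemma starP_algebraMap (c : ℝ) :
    starP (algebraMap ℝ (FreeStarAlg g) c) = algebraMap ℝ (FreeStarAlg g) c := by
  show starP (MonoidAlgebra.single 1 c) = _
  rw [starP_single, starWord_one]; rfl

lemma starP_apply_starWord (a : FreeStarAlg g) (w : FreeMonoid (Fin g ⊕ Fin g)) :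
    (starP a).coeff (starWord w) = a.coeff w := by
  rw [starP, MonoidAlgebra.coeff_ofCoeff]
  exact Finsupp.mapDomain_apply starWord_injective a.coeff w

lemma deg_starP (a : FreeStarAlg g) : deg (starP a) = deg a := by
  classical
  rw [deg, deg, starP, MonoidAlgebra.coeff_ofCoeff, Finsupp.mapDomain_support_of_injective starWord_injective,
    Finset.sup_image]
  exact Finset.sup_congr rfl fun w _ => length_starWord w

lemma mem_support_starP {a : FreeStarAlg g} {w : FreeMonoid (Fin g ⊕ Fin g)} :
    starWord w ∈ (starP a).coeff.support ↔ w ∈ a.coeff.support := by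
  simp only [Finsupp.mem_support_iff, starP_apply_starWord]

end FreeStarAlg
namespace FreeStarAlg
variable {g : ℕ}

lemma le_deg {p : FreeStarAlg g} {w : FreeMonoid (Fin g ⊕ Fin g)} (h : w ∈ p.coeff.support) :
    (FreeMonoid.toList w).length ≤ deg p :=
  Finset.le_sup (f := fun w => (FreeMonoid.toList w).length) h

lemma deg_le {p : FreeStarAlg g} {n : ℕ}
    (h : ∀ w ∈ p.coeff.support, (FreeMonoid.toList w).length ≤ n) : deg p ≤ n :=
  Finset.sup_le h

lemma deg_zero : deg (0 : FreeStarAlg g) = 0 := by simp [deg]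

lemma exists_deg {p : FreeStarAlg g} (hp : p ≠ 0) :
    ∃ w ∈ p.coeff.support, (FreeMonoid.toList w).length = deg p := by
  obtain ⟨w, hw, h⟩ := Finset.exists_mem_eq_sup p.coeff.support
    (Finsupp.support_nonempty_iff.mpr (fun h => hp (MonoidAlgebra.coeff_eq_zero.mp h))) (fun w => (FreeMonoid.toList w).length)
  exact ⟨w, hw, h.symm⟩

lemma mul_apply_top (a b : FreeStarAlg g) (u v : FreeMonoid (Fin g ⊕ Fin g))
    (hu : ∀ w ∈ a.coeff.support, (FreeMonoid.toList w).length ≤ (FreeMonoid.toList u).length)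
    (hv : ∀ w ∈ b.coeff.support, (FreeMonoid.toList w).length ≤ (FreeMonoid.toList v).length) :
    (a * b).coeff (u * v) = a.coeff u * b.coeff v := by
  classical
  have key : ∀ a₁ ∈ a.coeff.support, ∀ a₂ ∈ b.coeff.support, a₁ * a₂ = u * v → a₁ = u ∧ a₂ = v := by
    intro a₁ h₁ a₂ h₂ h
    have hl : (FreeMonoid.toList a₁).length + (FreeMonoid.toList a₂).length
        = (FreeMonoid.toList u).length + (FreeMonoid.toList v).length := by
      have := congrArg (fun w => (FreeMonoid.toList w).length) h
      simpa [FreeMonoid.toList_mul] using this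
    have h1 : (FreeMonoid.toList a₁).length = (FreeMonoid.toList u).length := by
      have := hu _ h₁; have := hv _ h₂; omega
    have hli : FreeMonoid.toList a₁ ++ FreeMonoid.toList a₂
        = FreeMonoid.toList u ++ FreeMonoid.toList v := by
      have := congrArg FreeMonoid.toList h
      simpa [FreeMonoid.toList_mul] using this
    obtain ⟨e1, e2⟩ := List.append_inj hli h1
    exact ⟨e1, e2⟩
  rw [MonoidAlgebra.coeff_mul, Finsupp.sum, Finset.sum_eq_single u]
  · rw [Finsupp.sum, Finset.sum_eq_single v]
    · simp
    · intro a₂ h₂ hne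
      rw [if_neg]
      intro h
      exact hne (mul_left_cancel h)
    · intro hv'
      rw [Finsupp.notMem_support_iff.mp hv']
      simp
  · intro a₁ h₁ hne
    rw [Finsupp.sum]
    refine Finset.sum_eq_zero fun a₂ h₂ => ?_
    rw [if_neg]
    intro h
    exact hne (key _ h₁ _ h₂ h).1
  · intro hu'
    rw [Finsupp.notMem_support_iff.mp hu']
    simp [Finsupp.sum]

lemma deg_mul {a b : FreeStarAlg g} (ha : a ≠ 0) (hb : b ≠ 0) :
    a * b ≠ 0 ∧ deg (a * b) = deg a + deg b := by
  classical
  obtain ⟨u, hu, hul⟩ := exists_deg ha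
  obtain ⟨v, hv, hvl⟩ := exists_deg hb
  have h := mul_apply_top a b u v (fun w hw => hul ▸ le_deg hw) (fun w hw => hvl ▸ le_deg hw)
  have hne : (a * b).coeff (u * v) ≠ 0 := by
    rw [h]
    exact mul_ne_zero (Finsupp.mem_support_iff.mp hu) (Finsupp.mem_support_iff.mp hv)
  have hmem : u * v ∈ (a * b).coeff.support := Finsupp.mem_support_iff.mpr hne
  constructor
  · intro h0; rw [h0] at hmem; simp at hmem
  · refine le_antisymm (deg_le fun w hw => ?_) ?_
    · obtain ⟨y, hy, z, hz, rfl⟩ := Finset.mem_mul.mp (MonoidAlgebra.support_coeff_mul_subset a b hw)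
      have := le_deg hy; have := le_deg hz
      simp only [FreeMonoid.toList_mul, List.length_append]
      omega
    · have := le_deg hmem
      simpa [FreeMonoid.toList_mul, hul, hvl] using this

lemma mul_ne_zero' {a b : FreeStarAlg g} (ha : a ≠ 0) (hb : b ≠ 0) : a * b ≠ 0 :=
  (deg_mul ha hb).1

lemma deg_smul_eq {r : ℝ} (hr : r ≠ 0) (a : FreeStarAlg g) : deg (r • a) = deg a := by
  rw [deg, deg, MonoidAlgebra.coeff_smul, Finsupp.support_smul_eq hr]

lemma deg_add_const {x : FreeStarAlg g} (c : ℝ) (hx : 0 < deg x) :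
    deg (x + algebraMap ℝ (FreeStarAlg g) c) = deg x := by
  classical
  have hC : (algebraMap ℝ (FreeStarAlg g) c) = MonoidAlgebra.single 1 c := rfl
  refine le_antisymm (deg_le fun w hw => ?_) ?_
  · have := Finsupp.support_add (g₁ := x.coeff) (g₂ := (algebraMap ℝ (FreeStarAlg g) c).coeff) hw
    rcases Finset.mem_union.mp this with h | h
    · exact le_deg h
    · rw [hC, MonoidAlgebra.coeff_single] at h
      have := Finsupp.support_single_subset h
      simp only [Finset.mem_singleton] at this
      subst this
      simp
  · have hxne : x ≠ 0 := by intro h; rw [h, deg_zero] at hx; omega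
    obtain ⟨w, hw, hwl⟩ := exists_deg hxne
    have hw1 : w ≠ 1 := by
      intro h; rw [h] at hwl
      simp only [FreeMonoid.toList_one, List.length_nil] at hwl
      omega
    have : (x + algebraMap ℝ (FreeStarAlg g) c).coeff w ≠ 0 := by
      rw [MonoidAlgebra.coeff_add, Finsupp.add_apply, hC, MonoidAlgebra.coeff_single, Finsupp.single_apply, if_neg (fun h => hw1 h.symm), add_zero]
      exact Finsupp.mem_support_iff.mp hw
    have := le_deg (Finsupp.mem_support_iff.mpr this)
    omega

end FreeStarAlg
namespace FreeStarAlg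
variable {g : ℕ}

lemma sos_apply {k : ℕ} (t : Fin k → FreeStarAlg g) (w : FreeMonoid (Fin g ⊕ Fin g))
    (h : ∀ i, ∀ u ∈ (t i).coeff.support,
      (FreeMonoid.toList u).length ≤ (FreeMonoid.toList w).length) :
    (∑ i, starP (t i) * t i).coeff (starWord w * w) = ∑ i, ((t i).coeff w) ^ 2 := by
  rw [MonoidAlgebra.coeff_sum, Finsupp.finset_sum_apply]
  refine Finset.sum_congr rfl fun i _ => ?_
  have hstar : ∀ u ∈ (starP (t i)).coeff.support,
      (FreeMonoid.toList u).length ≤ (FreeMonoid.toList (starWord w)).length := by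
    intro u hu
    classical
    rw [starP, MonoidAlgebra.coeff_ofCoeff] at hu
    have := Finsupp.mapDomain_support hu
    obtain ⟨y, hy, rfl⟩ := Finset.mem_image.mp this
    rw [length_starWord, length_starWord]
    exact h i y hy
  rw [mul_apply_top _ _ _ _ hstar (h i), starP_apply_starWord, sq]

lemma sos_deg {k : ℕ} (t : Fin k → FreeStarAlg g) (i : Fin k) :
    2 * deg (t i) ≤ deg (∑ j, starP (t j) * t j) := by
  classical
  set D := Finset.univ.sup (fun j => deg (t j)) with hD
  have hiD : deg (t i) ≤ D := Finset.le_sup (f := fun j => deg (t j)) (Finset.mem_univ i)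
  rcases Nat.eq_zero_or_pos D with h0 | hpos
  · omega
  · obtain ⟨j, _, hj⟩ := Finset.exists_mem_eq_sup Finset.univ
      ⟨i, Finset.mem_univ i⟩ (fun j => deg (t j))
    have htj : t j ≠ 0 := by
      intro h; rw [h, deg_zero] at hj; omega
    obtain ⟨w, hw, hwl⟩ := exists_deg htj
    have hcoef : (∑ j, starP (t j) * t j).coeff (starWord w * w) = ∑ j', ((t j').coeff w) ^ 2 := by
      refine sos_apply t w fun i' u hu => ?_
      have := le_deg hu
      have : deg (t i') ≤ D := Finset.le_sup (f := fun j => deg (t j)) (Finset.mem_univ i')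
      omega
    have hpos' : (0:ℝ) < ∑ j', ((t j').coeff w) ^ 2 := by
      refine Finset.sum_pos' (fun j' _ => sq_nonneg _) ⟨j, Finset.mem_univ j, ?_⟩
      exact (sq_nonneg _).lt_of_ne (Ne.symm (pow_ne_zero 2 (Finsupp.mem_support_iff.mp hw)))
    have hmem : starWord w * w ∈ (∑ j, starP (t j) * t j).coeff.support := by
      rw [Finsupp.mem_support_iff, hcoef]
      exact hpos'.ne'
    have := le_deg hmem
    rw [FreeMonoid.toList_mul, List.length_append, length_starWord] at this
    omega

end FreeStarAlg
namespace FreeStarAlg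
variable {g : ℕ}

lemma ring_id {A : Type*} [Ring A] (q2 s q1 C : A) (h : C * q2 = q2 * C) :
    (-q2) * ((s + q1) * q2 + C) + ((-q2) * (s - q1) + C) * q2 = 2 * ((-q2) * s * q2) := by
  have h2 : ((-q2) * (s - q1) + C) * q2 = (-q2) * (s - q1) * q2 + q2 * C := by
    rw [add_mul, h]
  rw [h2]; noncomm_ring

end FreeStarAlg



open FreeStarAlg

/-- If `p = (s + q₁) q₂ + c` with `q₁, q₂` antisymmetric, `q₂ ≠ 0`,
`s` a nonzero sum of squares, `c` constant and `deg (s + q₁) > 0`, then the left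
ideal generated by `p` is not real; indeed `q₂* p + p* q₂ = 2 q₂* s q₂` is a
nonzero sum of squares in `I + I*`, and `deg q₂ < deg p`. -/
theorem stmt12 {g : ℕ} (s q1 q2 p : FreeStarAlg g) (c : ℝ)
    (hq1 : starP q1 = -q1) (hq2 : starP q2 = -q2) (hq2ne : q2 ≠ 0)
    (hs : IsSOS s) (hs0 : s ≠ 0) (hdeg : 0 < deg (s + q1))
    (hp : p = (s + q1) * q2 + algebraMap ℝ (FreeStarAlg g) c) :
    ¬ IsRealIdeal (leftIdealGen {p}) ∧
      starP q2 * p + starP p * q2 = 2 * (starP q2 * s * q2) ∧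
      IsSOS (starP q2 * p + starP p * q2) ∧
      starP q2 * p + starP p * q2 ≠ 0 ∧
      MemIplusIstar (leftIdealGen {p}) (starP q2 * p + starP p * q2) ∧
      deg q2 < deg p := by
  classical
  obtain ⟨k, t, hst⟩ := hs
  have hssym : starP s = s := by
    rw [hst, starP_sum]
    exact Finset.sum_congr rfl fun i _ => by rw [starP_mul, starP_starP]
  have hsp : starP p = (-q2) * (s - q1) + algebraMap ℝ (FreeStarAlg g) c := by
    rw [hp, starP_add, starP_mul, starP_algebraMap, starP_add, hssym, hq1, hq2, ← sub_eq_add_neg]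
  -- part 2
  have hid : starP q2 * p + starP p * q2 = 2 * (starP q2 * s * q2) := by
    rw [hsp, hp, hq2]
    exact ring_id q2 s q1 _ (Algebra.commutes c q2)
  -- sos witness
  set a : Fin k → FreeStarAlg g := fun i => (Real.sqrt 2 : ℝ) • (t i * q2) with ha
  have h22 : (Real.sqrt 2 : ℝ) * Real.sqrt 2 = 2 := Real.mul_self_sqrt (by norm_num)
  have hkey : (∑ i, starP (a i) * a i) = 2 * (starP q2 * s * q2) := by
    have step : ∀ i : Fin k, starP (a i) * a i
        = (2:ℝ) • (starP q2 * (starP (t i) * t i) * q2) := by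
      intro i
      rw [ha]
      show starP ((Real.sqrt 2 : ℝ) • (t i * q2)) * ((Real.sqrt 2 : ℝ) • (t i * q2)) = _
      rw [starP_smul, smul_mul_smul_comm, h22, starP_mul]
      congr 1
      noncomm_ring
    rw [Finset.sum_congr rfl fun i _ => step i, ← Finset.smul_sum]
    have : (∑ i, starP q2 * (starP (t i) * t i) * q2) = starP q2 * s * q2 := by
      rw [hst, Finset.mul_sum, Finset.sum_mul]
    rw [this, two_mul, two_smul]
  -- membership
  have hmemI : MemIplusIstar (leftIdealGen {p}) (starP q2 * p + starP p * q2) := by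
    refine ⟨starP q2 * p, ?_, starP q2 * p, ?_, ?_⟩
    · exact Submodule.mem_span_singleton.mpr ⟨starP q2, by rw [smul_eq_mul]⟩
    · exact Submodule.mem_span_singleton.mpr ⟨starP q2, by rw [smul_eq_mul]⟩
    · rw [starP_mul, starP_starP]
  -- degrees
  have hq2s : starP q2 ≠ 0 := fun h => hq2ne (starP_eq_zero_iff.mp h)
  have hspne : s + q1 ≠ 0 := by
    intro h; rw [h, deg_zero] at hdeg; omega
  have hmul := deg_mul hspne hq2ne
  have hdegp : deg p = deg (s + q1) + deg q2 := by
    rw [hp, deg_add_const c (by rw [hmul.2]; omega), hmul.2]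
  have hpne : p ≠ 0 := by intro h; rw [h, deg_zero] at hdegp; omega
  have hdegs_le : deg s ≤ deg (s + q1) := by
    have h2s : (2:ℝ) • s = (s + q1) + starP (s + q1) := by
      rw [starP_add, hssym, hq1, two_smul]; abel
    rw [← deg_smul_eq (two_ne_zero) s, h2s]
    refine deg_le fun w hw => ?_
    rcases Finset.mem_union.mp (Finsupp.support_add (g₁ := (s + q1).coeff) (g₂ := (starP (s + q1)).coeff) hw) with h | h
    · exact le_deg h
    · have := le_deg h
      rwa [deg_starP] at this
  refine ⟨?_, hid, ⟨k, a, by rw [hid, ← hkey]⟩, ?_, hmemI, by omega⟩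
  · -- not real
    intro hreal
    have hmem' : MemIplusIstar (leftIdealGen {p}) (∑ i, starP (a i) * a i) := by
      rw [hkey, ← hid]; exact hmemI
    have hall := hreal k a hmem'
    have hex : ∃ i, t i ≠ 0 := by
      by_contra h
      push_neg at h
      apply hs0
      rw [hst]
      exact Finset.sum_eq_zero fun i _ => by rw [h i, starP_zero, zero_mul]
    obtain ⟨i, hti⟩ := hex
    obtain ⟨r, hr⟩ := Submodule.mem_span_singleton.mp (hall i)
    rw [smul_eq_mul] at hr
    have hsqrt : (Real.sqrt 2 : ℝ) ≠ 0 := Real.sqrt_ne_zero'.mpr (by norm_num)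
    have haine : a i ≠ 0 := smul_ne_zero hsqrt (mul_ne_zero' hti hq2ne)
    have hrne : r ≠ 0 := by rintro rfl; rw [zero_mul] at hr; exact haine hr.symm
    have hdega : deg (a i) = deg (t i) + deg q2 := by
      show deg ((Real.sqrt 2 : ℝ) • (t i * q2)) = _
      rw [deg_smul_eq hsqrt, (deg_mul hti hq2ne).2]
    have hdegr : deg (a i) = deg r + deg p := by
      rw [← hr, (deg_mul hrne hpne).2]
    have hsos := sos_deg t i
    rw [← hst] at hsos
    omega
  · -- nonzero
    rw [hid]
    have hne : starP q2 * s * q2 ≠ 0 := mul_ne_zero' (mul_ne_zero' hq2s hs0) hq2ne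
    have := smul_ne_zero (two_ne_zero (α := ℝ)) hne
    rwa [two_smul, ← two_mul] at this
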